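/- Preservation of stochastic monotonicity under independent augmentation (second part): Let X, Y, Z be random elements with partially ordered Polish sample spaces, suppose X is stochastically increasing in Y, and Z is independent of (X, Y). Then (X, Z) is stochastically increasing in the pair (Y, Z): for every bounded nondecreasing h, (y,z) ↦ E[h(X,Z) | Y=y, Z=z] is nondecreasing in (y,z) with the product order. -/

import Mathlib

open MeasureTheory ProbabilityTheory
open scoped ENNReal

/-- Preservation of stochastic monotonicity under independent augmentation (second part):
if `X` is stochastically increasing in `Y` (expressed via a stochastically monotone
conditional-distribution kernel `κ` of `X` given `Y`) and `Z` is independent of `(X, Y)`,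
then `(X, Z)` is stochastically increasing in the pair `(Y, Z)`: there is a version `η`
of the conditional distribution of `(X, Z)` given `(Y, Z)` with `(y, z) ↦ ∫ h dη(y, z)`
nondecreasing (product orders) for every bounded nondecreasing measurable `h`. -/
theorem stmt15
    {Ω : Type*} [MeasurableSpace Ω] (μ : Measure Ω) [IsProbabilityMeasure μ]
    {α β γ : Type*}
    [MeasurableSpace α] [PartialOrder α] [StandardBorelSpace α]
    [MeasurableSpace β] [PartialOrder β] [StandardBorelSpace β]
    [MeasurableSpace γ] [PartialOrder γ] [StandardBorelSpace γ]
    (X : Ω → α) (Y : Ω → β) (Z : Ω → γ)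
    (hX : Measurable X) (hY : Measurable Y) (hZ : Measurable Z)
    (hindep : IndepFun (fun ω => (X ω, Y ω)) Z μ)
    (κ : Kernel β α) [IsMarkovKernel κ]
    (hκ : μ.map (fun ω => (Y ω, X ω)) = (μ.map Y) ⊗ₘ κ)
    (hκmono : ∀ g : α → ℝ, Measurable g → Monotone g → (∃ C, ∀ x, |g x| ≤ C) →
      Monotone (fun y => ∫ x, g x ∂(κ y))) :
    ∃ η : Kernel (β × γ) (α × γ), IsMarkovKernel η ∧
      μ.map (fun ω => ((Y ω, Z ω), (X ω, Z ω))) =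
        (μ.map (fun ω => (Y ω, Z ω))) ⊗ₘ η ∧
      ∀ h : α × γ → ℝ, Measurable h → Monotone h → (∃ C, ∀ x, |h x| ≤ C) →
        Monotone (fun yz => ∫ x, h x ∂(η yz)) := by
  classical
  refine ⟨(κ.comap Prod.fst measurable_fst) ×ₖ
    (Kernel.deterministic Prod.snd measurable_snd), inferInstance, ?_, ?_⟩
  · -- measure equality
    set η : Kernel (β × γ) (α × γ) := (κ.comap Prod.fst measurable_fst) ×ₖ
      (Kernel.deterministic Prod.snd measurable_snd) with hηdef
    have hηapp : ∀ p : β × γ, η p = (κ p.1).prod (Measure.dirac p.2) := by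
      intro p
      rw [hηdef, Kernel.prod_apply, Kernel.comap_apply, Kernel.deterministic_apply]
    have hXY : Measurable fun ω => (X ω, Y ω) := hX.prodMk hY
    have hYZm : Measurable fun ω => (Y ω, Z ω) := hY.prodMk hZ
    have hFm : Measurable fun ω => ((Y ω, Z ω), (X ω, Z ω)) :=
      hYZm.prodMk (hX.prodMk hZ)
    have hYZind : IndepFun Y Z μ := by
      have := hindep.comp measurable_snd measurable_id
      simpa [Function.comp_def] using this
    have hmapYZ : μ.map (fun ω => (Y ω, Z ω)) = (μ.map Y).prod (μ.map Z) :=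
      (indepFun_iff_map_prod_eq_prod_map_map hY.aemeasurable hZ.aemeasurable).mp hYZind
    have : IsProbabilityMeasure (μ.map (fun ω => (Y ω, Z ω))) :=
      Measure.isProbabilityMeasure_map hYZm.aemeasurable
    have : IsProbabilityMeasure (μ.map (fun ω => ((Y ω, Z ω), (X ω, Z ω)))) :=
      Measure.isProbabilityMeasure_map hFm.aemeasurable
    refine MeasureTheory.ext_of_generate_finite
      (Set.image2 (· ×ˢ ·)
        (Set.image2 (· ×ˢ ·) {s : Set β | MeasurableSet s} {t : Set γ | MeasurableSet t})
        (Set.image2 (· ×ˢ ·) {s : Set α | MeasurableSet s} {t : Set γ | MeasurableSet t}))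
      ?_ ?_ ?_ ?_
    · exact (generateFrom_eq_prod generateFrom_prod generateFrom_prod
        (isCountablySpanning_measurableSet.prod isCountablySpanning_measurableSet)
        (isCountablySpanning_measurableSet.prod isCountablySpanning_measurableSet)).symm
    · exact (MeasurableSpace.isPiSystem_measurableSet.prod MeasurableSpace.isPiSystem_measurableSet).prod
        (MeasurableSpace.isPiSystem_measurableSet.prod MeasurableSpace.isPiSystem_measurableSet)
    · rintro _ ⟨_, ⟨A, hA, B, hB, rfl⟩, _, ⟨C, hC, D, hD, rfl⟩, rfl⟩
      -- LHS
      have hmeasset : MeasurableSet ((A ×ˢ B) ×ˢ (C ×ˢ D)) :=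
        ((hA.prod hB).prod (hC.prod hD))
      rw [Measure.map_apply hFm hmeasset]
      have hpre : (fun ω => ((Y ω, Z ω), (X ω, Z ω))) ⁻¹' ((A ×ˢ B) ×ˢ (C ×ˢ D)) =
          ((fun ω => (X ω, Y ω)) ⁻¹' (C ×ˢ A)) ∩ (Z ⁻¹' (B ∩ D)) := by
        ext ω
        simp only [Set.mem_preimage, Set.mem_prod, Set.mem_inter_iff]
        tauto
      rw [hpre, hindep.measure_inter_preimage_eq_mul _ _ (hC.prod hA) (hB.inter hD)]
      have hpre2 : (fun ω => (X ω, Y ω)) ⁻¹' (C ×ˢ A) =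
          (fun ω => (Y ω, X ω)) ⁻¹' (A ×ˢ C) := by
        ext ω
        simp only [Set.mem_preimage, Set.mem_prod]
        tauto
      have hL : μ ((fun ω => (X ω, Y ω)) ⁻¹' (C ×ˢ A)) = ∫⁻ y in A, κ y C ∂(μ.map Y) := by
        rw [hpre2, ← Measure.map_apply (hY.prodMk hX) (hA.prod hC), hκ,
          Measure.compProd_apply_prod hA hC]
      rw [hL, ← Measure.map_apply hZ (hB.inter hD)]
      -- RHS
      rw [Measure.compProd_apply_prod (hA.prod hB) (hC.prod hD), hmapYZ]
      have hηval : ∀ p : β × γ, η p (C ×ˢ D) = κ p.1 C * D.indicator 1 p.2 := by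
        intro p
        rw [hηapp, Measure.prod_prod, Measure.dirac_apply' _ hD]
      calc (∫⁻ y in A, κ y C ∂(μ.map Y)) * (μ.map Z) (B ∩ D)
          = (∫⁻ y, A.indicator (fun y => κ y C) y ∂(μ.map Y)) *
            ∫⁻ z, (B ∩ D).indicator 1 z ∂(μ.map Z) := by
            rw [lintegral_indicator hA, lintegral_indicator_one (hB.inter hD)]
        _ = ∫⁻ p, A.indicator (fun y => κ y C) p.1 * (B ∩ D).indicator 1 p.2
              ∂((μ.map Y).prod (μ.map Z)) := by
            rw [lintegral_prod_mul ((Kernel.measurable_coe κ hC).indicator hA).aemeasurable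
              ((measurable_one.indicator (hB.inter hD)).aemeasurable)]
        _ = ∫⁻ p, (A ×ˢ B).indicator (fun p : β × γ => η p (C ×ˢ D)) p
              ∂((μ.map Y).prod (μ.map Z)) := by
            refine lintegral_congr fun p => ?_
            rcases p with ⟨y, z⟩
            by_cases hy : y ∈ A <;> by_cases hz : z ∈ B <;> by_cases hzd : z ∈ D <;>
              simp [Set.indicator, hy, hz, hzd, hηval, Set.mem_prod]
        _ = ∫⁻ p in A ×ˢ B, η p (C ×ˢ D) ∂((μ.map Y).prod (μ.map Z)) := by
            rw [lintegral_indicator (hA.prod hB)]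
    · simp
  · -- monotonicity
    intro h hh hmono ⟨C, hC⟩
    set η : Kernel (β × γ) (α × γ) := (κ.comap Prod.fst measurable_fst) ×ₖ
      (Kernel.deterministic Prod.snd measurable_snd) with hηdef
    have hηapp : ∀ p : β × γ, η p = (κ p.1).prod (Measure.dirac p.2) := by
      intro p
      rw [hηdef, Kernel.prod_apply, Kernel.comap_apply, Kernel.deterministic_apply]
    have hint : ∀ (y : β) (z : γ), Integrable h ((κ y).prod (Measure.dirac z)) := by
      intro y z
      refine ⟨hh.aestronglyMeasurable, HasFiniteIntegral.of_bounded (C := C) ?_⟩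
      exact ae_of_all _ fun x => by simpa [Real.norm_eq_abs] using hC x
    have hint2 : ∀ (z : γ) (y : β), Integrable (fun x => h (x, z)) (κ y) := by
      intro z y
      refine ⟨(hh.comp (measurable_id.prodMk measurable_const)).aestronglyMeasurable,
        HasFiniteIntegral.of_bounded (C := C) ?_⟩
      exact ae_of_all _ fun x => by simpa [Real.norm_eq_abs] using hC (x, z)
    have key : ∀ p : β × γ, ∫ x, h x ∂(η p) = ∫ x, h (x, p.2) ∂(κ p.1) := by
      intro p
      rw [hηapp, MeasureTheory.integral_prod _ (hint p.1 p.2)]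
      refine integral_congr_ae (Filter.Eventually.of_forall fun x => ?_)
      exact integral_dirac' _ _ ((hh.comp measurable_prodMk_left).stronglyMeasurable)
    intro p q hpq
    simp only [key]
    calc ∫ x, h (x, p.2) ∂(κ p.1)
        ≤ ∫ x, h (x, p.2) ∂(κ q.1) := by
          refine hκmono (fun x => h (x, p.2))
            (hh.comp (measurable_id.prodMk measurable_const))
            (fun a b hab => hmono (Prod.mk_le_mk.mpr ⟨hab, le_rfl⟩))
            ⟨C, fun x => hC _⟩ hpq.1
      _ ≤ ∫ x, h (x, q.2) ∂(κ q.1) :=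
          integral_mono (hint2 p.2 q.1) (hint2 q.2 q.1)
            (fun x => hmono (Prod.mk_le_mk.mpr ⟨le_rfl, hpq.2⟩))
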